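/- Let ξ be a random variable taking values in ℕ (including 0) with geometric distribution P(ξ = i) = (1−p)^i · p for i ≥ 0, where p ∈ (0,1). Then for every integer k ≥ 1, E((ξ+1)^k)/E(ξ^k) = (1 + E ξ)/E ξ, and E ξ = (1−p)/p. -/

import Mathlib

open MeasureTheory

lemma geom_total {p : ℝ} (hp : p ∈ Set.Ioo (0 : ℝ) 1) :
    ∑' i : ℕ, ENNReal.ofReal ((1 - p) ^ i * p) = 1 := by
  obtain ⟨hp0, hp1⟩ := hp
  have hsum : Summable (fun i : ℕ => (1 - p) ^ i * p) :=
    (summable_geometric_of_lt_one (by linarith) (by linarith)).mul_right p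
  rw [← ENNReal.ofReal_tsum_of_nonneg (fun i => mul_nonneg (pow_nonneg (by linarith) _) hp0.le) hsum, tsum_mul_right,
    tsum_geometric_of_lt_one (by linarith) (by linarith)]
  rw [show (1 - (1 - p))⁻¹ * p = 1 by rw [sub_sub_cancel, inv_mul_cancel₀ hp0.ne']]
  exact ENNReal.ofReal_one

lemma geom_aemeasurable {Ω : Type*} [MeasureSpace Ω] (ℙ : Measure Ω) [IsProbabilityMeasure ℙ]
    (p : ℝ) (hp : p ∈ Set.Ioo (0 : ℝ) 1) (ξ : Ω → ℕ)
    (hξ : ∀ i : ℕ, ℙ {ω | ξ ω = i} = ENNReal.ofReal ((1 - p) ^ i * p)) :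
    AEMeasurable ξ ℙ := by
  have htotal := geom_total hp
  have hA : ∀ i : ℕ, NullMeasurableSet {ω | ξ ω = i} ℙ := by
    intro i
    set B : ℕ → Set Ω := fun j => toMeasurable ℙ {ω | ξ ω = j} with hB
    have hBm : ∀ j, MeasurableSet (B j) := fun j => measurableSet_toMeasurable _ _
    have hBsub : ∀ j, {ω | ξ ω = j} ⊆ B j := fun j => subset_toMeasurable _ _
    have hBμ : ∀ j, ℙ (B j) = ENNReal.ofReal ((1 - p) ^ j * p) := fun j =>
      (measure_toMeasurable _).trans (hξ j)
    set D : Set Ω := ⋃ j, (if j = i then (∅ : Set Ω) else B j) with hD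
    have hDm : MeasurableSet D := by
      refine MeasurableSet.iUnion fun j => ?_
      split
      · exact MeasurableSet.empty
      · exact hBm j
    have hDc : Dᶜ ⊆ {ω | ξ ω = i} := by
      intro ω hω
      by_contra h
      simp only [Set.mem_setOf_eq] at h
      refine hω (Set.mem_iUnion.2 ⟨ξ ω, ?_⟩)
      rw [if_neg h]
      exact hBsub (ξ ω) rfl
    have hofle : ENNReal.ofReal ((1 - p) ^ i * p) ≤ 1 := by
      rw [← htotal]; exact ENNReal.le_tsum i
    have hDle : ℙ D + ENNReal.ofReal ((1 - p) ^ i * p) ≤ 1 := by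
      rw [← htotal, ENNReal.tsum_eq_add_tsum_ite
        (f := fun j : ℕ => ENNReal.ofReal ((1 - p) ^ j * p)) i, add_comm (ℙ D)]
      have h1 : ℙ D ≤ ∑' j : ℕ, ℙ (if j = i then (∅ : Set Ω) else B j) :=
        measure_iUnion_le _
      refine add_le_add le_rfl (h1.trans (ENNReal.tsum_le_tsum fun j => ?_))
      by_cases h : j = i
      · subst h; simp
      · rw [if_neg h, if_neg h, hBμ j]
    have hcover : ℙ (B i ∪ D) = 1 := by
      have huniv : B i ∪ D = Set.univ := by
        ext ω
        simp only [Set.mem_union, Set.mem_univ, iff_true]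
        by_cases h : ξ ω = i
        · exact Or.inl (hBsub i h)
        · exact Or.inr (Set.mem_iUnion.2 ⟨ξ ω, by rw [if_neg h]; exact hBsub (ξ ω) rfl⟩)
      rw [huniv]; exact measure_univ
    have hnull : ℙ (B i ∩ D) = 0 := by
      have h3 := measure_union_add_inter (μ := ℙ) (B i) hDm
      rw [hcover, hBμ i] at h3
      have h4 : (1 : ENNReal) + ℙ (B i ∩ D) ≤ 1 + 0 := by
        rw [add_zero, h3, add_comm]
        exact hDle
      exact le_antisymm (by simpa using ENNReal.le_of_add_le_add_left (by simp) h4) (by positivity)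
    refine hDm.compl.nullMeasurableSet.congr (MeasureTheory.ae_eq_set.2 ⟨?_, ?_⟩)
    · rw [Set.diff_eq_empty.mpr hDc, measure_empty]
    · refine measure_mono_null ?_ hnull
      intro ω hω
      exact ⟨hBsub i hω.1, not_not.mp hω.2⟩
  have hNM : NullMeasurable ξ ℙ := fun s _ => by
    have hs : ξ ⁻¹' s = ⋃ i ∈ s, {ω | ξ ω = i} := by ext ω; simp
    rw [hs]
    exact NullMeasurableSet.biUnion (Set.to_countable s) fun i _ => hA i
  exact hNM.aemeasurable

lemma geom_integral {Ω : Type*} [MeasureSpace Ω] (ℙ : Measure Ω) [IsProbabilityMeasure ℙ]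
    (p : ℝ) (hp : p ∈ Set.Ioo (0 : ℝ) 1) (ξ : Ω → ℕ)
    (hξ : ∀ i : ℕ, ℙ {ω | ξ ω = i} = ENNReal.ofReal ((1 - p) ^ i * p))
    (g : ℕ → ℝ) (hg0 : ∀ i, 0 ≤ g i) (hg : Summable fun i => g i * (1 - p) ^ i) :
    ∫ ω, g (ξ ω) ∂ℙ = ∑' i, g i * ((1 - p) ^ i * p) := by
  obtain ⟨hp0, hp1⟩ := hp
  have hq0 : (0 : ℝ) < 1 - p := by linarith
  have hgs : Summable fun i => g i * ((1 - p) ^ i * p) :=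
    (hg.mul_right p).congr fun i => by ring
  have hae := geom_aemeasurable ℙ p ⟨hp0, hp1⟩ ξ hξ
  have hμ : ∀ i : ℕ, (ℙ.map ξ) {i} = ENNReal.ofReal ((1 - p) ^ i * p) := by
    intro i
    rw [Measure.map_apply_of_aemeasurable hae (measurableSet_singleton i)]
    exact hξ i
  have hint : Integrable g (ℙ.map ξ) := by
    refine ⟨measurable_from_nat.aestronglyMeasurable, ?_⟩
    have hli : ∫⁻ a, ‖g a‖₊ ∂(ℙ.map ξ) = ∑' a : ℕ, (‖g a‖₊ : ENNReal) * (ℙ.map ξ) {a} :=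
      lintegral_countable' _
    simp only [HasFiniteIntegral, enorm_eq_nnnorm]
    rw [hli]
    have heq : ∀ a : ℕ, (‖g a‖₊ : ENNReal) * (ℙ.map ξ) {a}
        = ENNReal.ofReal (g a * ((1 - p) ^ a * p)) := by
      intro a
      rw [hμ a, ENNReal.ofReal_mul (hg0 a)]
      congr 1
      rw [← enorm_eq_nnnorm, ← ofReal_norm, Real.norm_of_nonneg (hg0 a)]
    rw [tsum_congr heq, ← ENNReal.ofReal_tsum_of_nonneg
      (fun a => mul_nonneg (hg0 a) (mul_nonneg (pow_nonneg hq0.le _) hp0.le)) hgs]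
    exact ENNReal.ofReal_lt_top
  have h1 : ∫ ω, g (ξ ω) ∂ℙ = ∫ a, g a ∂(ℙ.map ξ) :=
    (integral_map hae measurable_from_nat.aestronglyMeasurable).symm
  rw [h1, integral_countable' hint]
  refine tsum_congr fun a => ?_
  rw [measureReal_def, hμ a, ENNReal.toReal_ofReal (mul_nonneg (pow_nonneg hq0.le _) hp0.le), smul_eq_mul,
    mul_comm]

theorem stmt_8 {Ω : Type*} [MeasureSpace Ω] (ℙ : Measure Ω) [IsProbabilityMeasure ℙ]
    (p : ℝ) (hp : p ∈ Set.Ioo (0 : ℝ) 1) (ξ : Ω → ℕ)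
    (hξ : ∀ i : ℕ, ℙ {ω | ξ ω = i} = ENNReal.ofReal ((1 - p) ^ i * p))
    (k : ℕ) (hk : 1 ≤ k) :
    (∫ ω, ((ξ ω : ℝ) + 1) ^ k ∂ℙ) / (∫ ω, (ξ ω : ℝ) ^ k ∂ℙ)
        = (1 + ∫ ω, (ξ ω : ℝ) ∂ℙ) / (∫ ω, (ξ ω : ℝ) ∂ℙ) ∧
    (∫ ω, (ξ ω : ℝ) ∂ℙ) = (1 - p) / p := by
  obtain ⟨hp0, hp1⟩ := hp
  have hq0 : (0 : ℝ) < 1 - p := by linarith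
  have hq1 : (1 : ℝ) - p < 1 := by linarith
  have hqn : ‖(1 : ℝ) - p‖ < 1 := by rw [Real.norm_of_nonneg hq0.le]; exact hq1
  have hs : ∀ m : ℕ, Summable fun i : ℕ => (i : ℝ) ^ m * (1 - p) ^ i := fun m =>
    summable_pow_mul_geometric_of_norm_lt_one m hqn
  -- summability of the three integrands
  have hsk : Summable fun i : ℕ => (i : ℝ) ^ k * (1 - p) ^ i := hs k
  have hs1 : Summable fun i : ℕ => (i : ℝ) * (1 - p) ^ i :=
    (hs 1).congr fun i => by rw [pow_one]
  have hsk1 : Summable fun i : ℕ => ((i : ℝ) + 1) ^ k * (1 - p) ^ i := by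
    have h := ((summable_nat_add_iff 1).2 (hs k)).div_const (1 - p)
    refine h.congr fun i => ?_
    push_cast
    field_simp
    ring
  -- the three integrals
  have e1 : ∫ ω, ((ξ ω : ℝ) + 1) ^ k ∂ℙ = ∑' i : ℕ, ((i : ℝ) + 1) ^ k * ((1 - p) ^ i * p) :=
    geom_integral ℙ p ⟨hp0, hp1⟩ ξ hξ (fun i => ((i : ℝ) + 1) ^ k)
      (fun i => by positivity) hsk1
  have e2 : ∫ ω, (ξ ω : ℝ) ^ k ∂ℙ = ∑' i : ℕ, (i : ℝ) ^ k * ((1 - p) ^ i * p) :=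
    geom_integral ℙ p ⟨hp0, hp1⟩ ξ hξ (fun i => (i : ℝ) ^ k) (fun i => by positivity) hsk
  have e3 : ∫ ω, (ξ ω : ℝ) ∂ℙ = ∑' i : ℕ, (i : ℝ) * ((1 - p) ^ i * p) :=
    geom_integral ℙ p ⟨hp0, hp1⟩ ξ hξ (fun i => (i : ℝ)) (fun i => by positivity) hs1
  -- value of the mean
  have hmean : ∑' i : ℕ, (i : ℝ) * ((1 - p) ^ i * p) = (1 - p) / p := by
    have : ∀ i : ℕ, (i : ℝ) * ((1 - p) ^ i * p) = ((i : ℝ) * (1 - p) ^ i) * p := fun i => by ring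
    rw [tsum_congr this, tsum_mul_right, tsum_coe_mul_geometric_of_norm_lt_one hqn]
    have hpp : (1 : ℝ) - (1 - p) = p := by ring
    rw [hpp]
    field_simp
  -- summability with the p factor
  have hskp : Summable fun i : ℕ => (i : ℝ) ^ k * ((1 - p) ^ i * p) :=
    (hsk.mul_right p).congr fun i => by ring
  have hsk1p : Summable fun i : ℕ => ((i : ℝ) + 1) ^ k * ((1 - p) ^ i * p) :=
    (hsk1.mul_right p).congr fun i => by ring
  -- positivity of E ξ^k
  have hEpos : 0 < ∑' i : ℕ, (i : ℝ) ^ k * ((1 - p) ^ i * p) := by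
    have h1le : (1 : ℝ) ^ k * ((1 - p) ^ 1 * p) ≤ ∑' i : ℕ, (i : ℝ) ^ k * ((1 - p) ^ i * p) := by
      have := hskp.le_tsum 1 (fun j _ => by positivity)
      simpa using this
    have : (0 : ℝ) < (1 : ℝ) ^ k * ((1 - p) ^ 1 * p) := by positivity
    linarith
  -- shift identity : (1-p) * E (ξ+1)^k = E ξ^k
  have hshift : (1 - p) * ∑' i : ℕ, ((i : ℝ) + 1) ^ k * ((1 - p) ^ i * p)
      = ∑' i : ℕ, (i : ℝ) ^ k * ((1 - p) ^ i * p) := by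
    rw [← tsum_mul_left]
    rw [hskp.tsum_eq_zero_add]
    have h0 : ((0 : ℕ) : ℝ) ^ k * ((1 - p) ^ (0 : ℕ) * p) = 0 := by
      rw [Nat.cast_zero, zero_pow (by omega)]
      ring
    rw [h0, zero_add]
    refine tsum_congr fun i => ?_
    push_cast
    ring
  refine ⟨?_, by rw [e3, hmean]⟩
  rw [e1, e2, e3, hmean, ← hshift]
  have hEne : (∑' i : ℕ, ((i : ℝ) + 1) ^ k * ((1 - p) ^ i * p)) ≠ 0 := by
    intro h
    rw [h, mul_zero] at hshift
    exact hEpos.ne' hshift.symm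
  rw [div_eq_div_iff (mul_ne_zero hq0.ne' hEne) (div_ne_zero hq0.ne' hp0.ne'), one_add_div hp0.ne']
  ring
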